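/- Let r ≥ 1 and n ≥ 5r+4. Let C_n^r be the r-th power of the cycle on vertex set Z/n, and let R be the induced subgraph of C_n^r on the vertices {3r+4, 3r+5, …, n−1, 0} together with the extra edges (−x, 3r+3+y) for all 0 ≤ x ≤ r−1, 1 ≤ y ≤ r with x + y ≤ r. Then R is isomorphic to C_{n−(3r+3)}^r, the r-th power of the cycle on n−(3r+3) vertices. -/
import Mathlib


/-- The `r`-th power of the cycle on `n` vertices: `i ~ j` iff their cyclic distance is
between `1` and `r`. -/
def cyclePow (n r : ℕ) : SimpleGraph (ZMod n) :=
  SimpleGraph.fromRel (fun i j => ∃ d : ℕ, 1 ≤ d ∧ d ≤ r ∧ i + (d : ZMod n) = j)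

/-- The extra edges `(-x, 3r+3+y)` for `0 ≤ x ≤ r-1`, `1 ≤ y ≤ r`, `x + y ≤ r`. -/
def extraRel (n r : ℕ) (i j : ZMod n) : Prop :=
  ∃ x y : ℕ, x ≤ r - 1 ∧ 1 ≤ y ∧ y ≤ r ∧ x + y ≤ r ∧
    i = -(x : ZMod n) ∧ j = ((3 * r + 3 + y : ℕ) : ZMod n)

/-- The vertex set `{3r+4, 3r+5, …, n-1, 0}` of the graph `R`. -/
def Rset (n r : ℕ) : Set (ZMod n) :=
  {v | v = 0 ∨ ∃ m : ℕ, 3 * r + 4 ≤ m ∧ m ≤ n - 1 ∧ v = (m : ZMod n)}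

/-- The graph `R_n^r`: the induced subgraph of `C_n^r` on `{3r+4, …, n-1, 0}` together
with the extra edges `(-x, 3r+3+y)`. -/
def Rgraph (n r : ℕ) : SimpleGraph (Rset n r) :=
  SimpleGraph.fromRel (fun a b => (cyclePow n r).Adj a.1 b.1 ∨ extraRel n r a.1 b.1)

/-- Helper: bounded natural casts to `ZMod m` are nearly injective. -/
lemma castEqCases (m a b : ℕ) (h : (a : ZMod m) = (b : ZMod m))
    (h2 : a < b + 2 * m) (h3 : b < a + 2 * m) : a = b ∨ a + m = b ∨ b + m = a := by
  have h' : a ≡ b [MOD m] := (ZMod.natCast_eq_natCast_iff a b m).mp h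
  rcases le_total a b with hab | hab
  · obtain ⟨c, hc⟩ := (Nat.modEq_iff_dvd' hab).mp h'
    have hc2 : c < 2 := by
      by_contra hcc
      push_neg at hcc
      have : m * 2 ≤ m * c := Nat.mul_le_mul_left _ hcc
      omega
    interval_cases c <;> omega
  · obtain ⟨c, hc⟩ := (Nat.modEq_iff_dvd' hab).mp h'.symm
    have hc2 : c < 2 := by
      by_contra hcc
      push_neg at hcc
      have : m * 2 ≤ m * c := Nat.mul_le_mul_left _ hcc
      omega
    interval_cases c <;> omega

/-- The canonical representative of `k : ZMod m` in `[1, m]`. -/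
def rep (m : ℕ) (k : ZMod m) : ℕ := if k = 0 then m else k.val

lemma rep_pos (m : ℕ) [NeZero m] (k : ZMod m) : 1 ≤ rep m k := by
  unfold rep
  split
  · exact Nat.pos_of_ne_zero (NeZero.ne m)
  · rename_i h
    have := (ZMod.val_eq_zero k).not.mpr h
    omega

lemma rep_le (m : ℕ) [NeZero m] (k : ZMod m) : rep m k ≤ m := by
  unfold rep
  split
  · exact le_refl m
  · exact (ZMod.val_lt k).le

lemma cast_rep (m : ℕ) [NeZero m] (k : ZMod m) : ((rep m k : ℕ) : ZMod m) = k := by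
  unfold rep
  split
  · rename_i h; simp [h]
  · simp [ZMod.natCast_val, ZMod.cast_id]

lemma rep_inj (m : ℕ) [NeZero m] (k l : ZMod m) (h : rep m k = rep m l) : k = l := by
  have := cast_rep m k
  rw [h, cast_rep] at this
  exact this.symm

/-- Adjacency in `cyclePow m r` in terms of canonical representatives. -/
lemma cyclePow_adj_iff (m r : ℕ) (hr : 1 ≤ r) (hm : 2 * r + 1 ≤ m) (k l : ZMod m) :
    (cyclePow m r).Adj k l ↔ rep m k ≠ rep m l ∧ ∃ d : ℕ, 1 ≤ d ∧ d ≤ r ∧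
      (rep m k + d = rep m l ∨ rep m l + d = rep m k ∨
       rep m k + d = rep m l + m ∨ rep m l + d = rep m k + m) := by
  haveI : NeZero m := ⟨by omega⟩
  have hkle := rep_le m k; have hlle := rep_le m l
  have hkpos := rep_pos m k; have hlpos := rep_pos m l
  rw [cyclePow, SimpleGraph.fromRel_adj]
  constructor
  · rintro ⟨hne, h⟩
    refine ⟨fun he => hne (rep_inj m k l he), ?_⟩
    rcases h with ⟨d, hd1, hd2, hd3⟩ | ⟨d, hd1, hd2, hd3⟩
    · have hc : ((rep m k + d : ℕ) : ZMod m) = ((rep m l : ℕ) : ZMod m) := by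
        push_cast
        rw [cast_rep, cast_rep]
        exact hd3
      have := castEqCases m (rep m k + d) (rep m l) hc (by omega) (by omega)
      exact ⟨d, hd1, hd2, by omega⟩
    · have hc : ((rep m l + d : ℕ) : ZMod m) = ((rep m k : ℕ) : ZMod m) := by
        push_cast
        rw [cast_rep, cast_rep]
        exact hd3
      have := castEqCases m (rep m l + d) (rep m k) hc (by omega) (by omega)
      exact ⟨d, hd1, hd2, by omega⟩
  · rintro ⟨hne, d, hd1, hd2, hd3⟩
    refine ⟨fun he => hne (by rw [he]), ?_⟩
    have key : ∀ a b : ZMod m, (rep m a + d = rep m b ∨ rep m a + d = rep m b + m) →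
        a + (d : ZMod m) = b := by
      intro a b hab
      have : ((rep m a + d : ℕ) : ZMod m) = ((rep m b : ℕ) : ZMod m) := by
        rcases hab with hab | hab <;> rw [hab] <;> push_cast <;> simp
      rw [Nat.cast_add] at this
      rw [← cast_rep m a, ← cast_rep m b]
      exact this
    rcases hd3 with h | h | h | h
    · exact Or.inl ⟨d, hd1, hd2, key k l (Or.inl h)⟩
    · exact Or.inr ⟨d, hd1, hd2, key l k (Or.inl h)⟩
    · exact Or.inl ⟨d, hd1, hd2, key k l (Or.inr h)⟩
    · exact Or.inr ⟨d, hd1, hd2, key l k (Or.inr h)⟩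

/-- Injectivity of the shift map. -/
lemma shift_inj (n m r : ℕ) (hm : 2 * r + 1 ≤ m) (hn : n = m + (3 * r + 3)) (k l : ZMod m)
    (h : ((rep m k + (3 * r + 3) : ℕ) : ZMod n) = ((rep m l + (3 * r + 3) : ℕ) : ZMod n)) :
    k = l := by
  haveI : NeZero m := ⟨by omega⟩
  have hkle := rep_le m k; have hlle := rep_le m l
  have hkpos := rep_pos m k; have hlpos := rep_pos m l
  have := castEqCases n _ _ h (by omega) (by omega)
  exact rep_inj m k l (by omega)

/-- Adjacency in the induced part. -/
lemma cyc_shift_adj_iff (n m r : ℕ) (hr : 1 ≤ r) (hm : 2 * r + 1 ≤ m)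
    (hn : n = m + (3 * r + 3)) (k l : ZMod m) :
    (cyclePow n r).Adj ((rep m k + (3 * r + 3) : ℕ) : ZMod n)
        ((rep m l + (3 * r + 3) : ℕ) : ZMod n) ↔
      k ≠ l ∧ ∃ d : ℕ, 1 ≤ d ∧ d ≤ r ∧
        (rep m k + d = rep m l ∨ rep m l + d = rep m k) := by
  haveI : NeZero m := ⟨by omega⟩
  have hkle := rep_le m k; have hlle := rep_le m l
  have hkpos := rep_pos m k; have hlpos := rep_pos m l
  rw [cyclePow, SimpleGraph.fromRel_adj]
  constructor
  · rintro ⟨hne, h⟩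
    refine ⟨fun he => hne (by rw [he]), ?_⟩
    rcases h with ⟨d, hd1, hd2, hd3⟩ | ⟨d, hd1, hd2, hd3⟩
    · have hc : ((rep m k + (3 * r + 3) + d : ℕ) : ZMod n)
          = ((rep m l + (3 * r + 3) : ℕ) : ZMod n) := by
        push_cast at hd3 ⊢
        linear_combination hd3
      have := castEqCases n _ _ hc (by omega) (by omega)
      exact ⟨d, hd1, hd2, by omega⟩
    · have hc : ((rep m l + (3 * r + 3) + d : ℕ) : ZMod n)
          = ((rep m k + (3 * r + 3) : ℕ) : ZMod n) := by
        push_cast at hd3 ⊢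
        linear_combination hd3
      have := castEqCases n _ _ hc (by omega) (by omega)
      exact ⟨d, hd1, hd2, by omega⟩
  · rintro ⟨hne, d, hd1, hd2, hd3⟩
    refine ⟨fun he => hne (shift_inj n m r hm hn k l he), ?_⟩
    rcases hd3 with h | h
    · refine Or.inl ⟨d, hd1, hd2, ?_⟩
      have : ((rep m k + (3 * r + 3) + d : ℕ) : ZMod n)
          = ((rep m l + (3 * r + 3) : ℕ) : ZMod n) := by
        rw [show rep m k + (3 * r + 3) + d = rep m l + (3 * r + 3) by omega]
      push_cast at this ⊢
      linear_combination this
    · refine Or.inr ⟨d, hd1, hd2, ?_⟩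
      have : ((rep m l + (3 * r + 3) + d : ℕ) : ZMod n)
          = ((rep m k + (3 * r + 3) : ℕ) : ZMod n) := by
        rw [show rep m l + (3 * r + 3) + d = rep m k + (3 * r + 3) by omega]
      push_cast at this ⊢
      linear_combination this

/-- The extra edges in terms of representatives. -/
lemma extra_iff (n m r : ℕ) (hr : 1 ≤ r) (hm : 2 * r + 1 ≤ m)
    (hn : n = m + (3 * r + 3)) (k l : ZMod m) :
    extraRel n r ((rep m k + (3 * r + 3) : ℕ) : ZMod n)
        ((rep m l + (3 * r + 3) : ℕ) : ZMod n) ↔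
      ∃ d : ℕ, 1 ≤ d ∧ d ≤ r ∧ rep m k + d = rep m l + m := by
  haveI : NeZero m := ⟨by omega⟩
  have hkle := rep_le m k; have hlle := rep_le m l
  have hkpos := rep_pos m k; have hlpos := rep_pos m l
  have negcast : ∀ x : ℕ, x ≤ n → -((x : ℕ) : ZMod n) = ((n - x : ℕ) : ZMod n) := by
    intro x hx
    rw [Nat.cast_sub hx, ZMod.natCast_self]
    ring
  constructor
  · rintro ⟨x, y, hx, hy1, hy2, hxy, hA, hB⟩
    rw [negcast x (by omega)] at hA
    have h1 := castEqCases n _ _ hA (by omega) (by omega)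
    have h2 := castEqCases n _ _ hB (by omega) (by omega)
    exact ⟨x + y, by omega, hxy, by omega⟩
  · rintro ⟨d, hd1, hd2, hd3⟩
    refine ⟨m - rep m k, rep m l, by omega, by omega, by omega, by omega, ?_, ?_⟩
    · rw [negcast (m - rep m k) (by omega)]
      rw [show n - (m - rep m k) = rep m k + (3 * r + 3) by omega]
    · rw [show 3 * r + 3 + rep m l = rep m l + (3 * r + 3) by omega]

/-- Transfer of adjacency along the shift map. -/
lemma main_adj (n m r : ℕ) (hr : 1 ≤ r) (hm : 2 * r + 1 ≤ m)
    (hn : n = m + (3 * r + 3)) (k l : ZMod m) (A B : Rset n r)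
    (hA : (A : ZMod n) = ((rep m k + (3 * r + 3) : ℕ) : ZMod n))
    (hB : (B : ZMod n) = ((rep m l + (3 * r + 3) : ℕ) : ZMod n)) :
    (Rgraph n r).Adj A B ↔ (cyclePow m r).Adj k l := by
  haveI : NeZero m := ⟨by omega⟩
  have hkle := rep_le m k; have hlle := rep_le m l
  have hkpos := rep_pos m k; have hlpos := rep_pos m l
  rw [Rgraph, SimpleGraph.fromRel_adj, hA, hB]
  rw [cyclePow_adj_iff m r hr hm]
  rw [cyc_shift_adj_iff n m r hr hm hn k l, cyc_shift_adj_iff n m r hr hm hn l k]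
  rw [extra_iff n m r hr hm hn k l, extra_iff n m r hr hm hn l k]
  have hne : A ≠ B ↔ rep m k ≠ rep m l := by
    constructor
    · intro h he
      exact h (Subtype.ext (by rw [hA, hB, he]))
    · intro h he
      have : (A : ZMod n) = (B : ZMod n) := by rw [he]
      rw [hA, hB] at this
      exact h (by rw [rep_inj m k l (by
        have := castEqCases n _ _ this (by omega) (by omega); omega)])
  have hkl : k ≠ l ↔ rep m k ≠ rep m l := by
    constructor
    · exact fun h he => h (rep_inj m k l he)
    · exact fun h he => h (by rw [he])
  rw [hne]
  constructor
  · rintro ⟨h0, (⟨_, d, hd1, hd2, hd3⟩ | hex) | (⟨_, d, hd1, hd2, hd3⟩ | hex)⟩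
    · exact ⟨h0, d, hd1, hd2, by omega⟩
    · obtain ⟨d, hd1, hd2, hd3⟩ := hex
      exact ⟨h0, d, hd1, hd2, by omega⟩
    · exact ⟨h0, d, hd1, hd2, by omega⟩
    · obtain ⟨d, hd1, hd2, hd3⟩ := hex
      exact ⟨h0, d, hd1, hd2, by omega⟩
  · rintro ⟨h0, d, hd1, hd2, hd3⟩
    refine ⟨h0, ?_⟩
    rcases hd3 with h | h | h | h
    · exact Or.inl (Or.inl ⟨hkl.mpr h0, d, hd1, hd2, Or.inl h⟩)
    · exact Or.inl (Or.inl ⟨hkl.mpr h0, d, hd1, hd2, Or.inr h⟩)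
    · exact Or.inl (Or.inr ⟨d, hd1, hd2, h⟩)
    · exact Or.inr (Or.inr ⟨d, hd1, hd2, h⟩)

theorem stmt11 (n r : ℕ) (hr : 1 ≤ r) (hn : 5 * r + 4 ≤ n) :
    Nonempty (Rgraph n r ≃g cyclePow (n - (3 * r + 3)) r) := by
  set m := n - (3 * r + 3) with hmdef
  have hn' : n = m + (3 * r + 3) := by omega
  have hm : 2 * r + 1 ≤ m := by omega
  haveI : NeZero m := ⟨by omega⟩
  haveI : NeZero n := ⟨by omega⟩
  have memF : ∀ k : ZMod m, ((rep m k + (3 * r + 3) : ℕ) : ZMod n) ∈ Rset n r := by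
    intro k
    have h1 := rep_pos m k
    have h2 := rep_le m k
    rcases eq_or_lt_of_le h2 with h | h
    · left
      rw [show rep m k + (3 * r + 3) = n by omega, ZMod.natCast_self]
    · exact Or.inr ⟨rep m k + (3 * r + 3), by omega, by omega, rfl⟩
  let F : ZMod m → Rset n r := fun k => ⟨_, memF k⟩
  have hinj : Function.Injective F := fun k l h =>
    shift_inj n m r hm hn' k l (Subtype.ext_iff.mp h)
  have hsurj : Function.Surjective F := by
    rintro ⟨v, hv | ⟨c, hc1, hc2, hc3⟩⟩
    · refine ⟨0, Subtype.ext ?_⟩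
      show ((rep m 0 + (3 * r + 3) : ℕ) : ZMod n) = v
      rw [hv, show rep m 0 = m from if_pos rfl,
        show m + (3 * r + 3) = n by omega, ZMod.natCast_self]
    · refine ⟨((c - (3 * r + 3) : ℕ) : ZMod m), Subtype.ext ?_⟩
      have hval : ZMod.val ((c - (3 * r + 3) : ℕ) : ZMod m) = c - (3 * r + 3) :=
        ZMod.val_cast_of_lt (by omega)
      have hk0 : ((c - (3 * r + 3) : ℕ) : ZMod m) ≠ 0 := by
        intro h
        rw [h, ZMod.val_zero] at hval
        omega
      have hrep : rep m ((c - (3 * r + 3) : ℕ) : ZMod m) = c - (3 * r + 3) := by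
        rw [rep, if_neg hk0]; exact hval
      show ((rep m ((c - (3 * r + 3) : ℕ) : ZMod m) + (3 * r + 3) : ℕ) : ZMod n) = v
      rw [hrep, show c - (3 * r + 3) + (3 * r + 3) = c by omega, hc3]
  refine ⟨SimpleGraph.Iso.symm ⟨Equiv.ofBijective F ⟨hinj, hsurj⟩, ?_⟩⟩
  intro k l
  exact main_adj n m r hr hm hn' k l (F k) (F l) rfl rfl
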